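/- Let C be a circle in the Euclidean plane and let a, b, c, d be four points lying on C in that cyclic order (clockwise or anticlockwise). Then every closed disc containing a and c also contains b or d. -/
import Mathlib

open Real

/-- The "determinant" `sin (β-α) + sin (γ-β) - sin (γ-α)` equals
`4 sin((β-α)/2) sin((γ-β)/2) sin((γ-α)/2)` and is positive for angles strictly
increasing within one turn. -/
lemma det_pos {α β γ : ℝ} (h1 : α < β) (h2 : β < γ) (h3 : γ < α + 2 * Real.pi) :
    0 < Real.sin (β - α) + Real.sin (γ - β) - Real.sin (γ - α) := by
  set x := (β - α) / 2 with hx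
  set y := (γ - β) / 2 with hy
  have hbx : β - α = 2 * x := by rw [hx]; ring
  have hby : γ - β = 2 * y := by rw [hy]; ring
  have hbxy : γ - α = 2 * (x + y) := by rw [hx, hy]; ring
  have key : Real.sin (2 * x) + Real.sin (2 * y) - Real.sin (2 * (x + y))
      = 4 * Real.sin x * Real.sin y * Real.sin (x + y) := by
    rw [Real.sin_two_mul, Real.sin_two_mul, Real.sin_two_mul, Real.sin_add,
      Real.cos_add]
    linear_combination (-2 * Real.sin y * Real.cos y) * (Real.sin_sq_add_cos_sq x)
      + (-2 * Real.sin x * Real.cos x) * (Real.sin_sq_add_cos_sq y)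
  rw [hbx, hby, hbxy, key]
  have hxpos : 0 < Real.sin x := Real.sin_pos_of_pos_of_lt_pi (by simp [hx]; linarith)
    (by rw [hx]; nlinarith [Real.pi_pos])
  have hypos : 0 < Real.sin y := Real.sin_pos_of_pos_of_lt_pi (by simp [hy]; linarith)
    (by rw [hy]; nlinarith [Real.pi_pos])
  have hxypos : 0 < Real.sin (x + y) := Real.sin_pos_of_pos_of_lt_pi
    (by rw [hx, hy]; linarith) (by rw [hx, hy]; linarith)
  positivity

/-- Any affine function of `(cos θ, sin θ)` satisfies a four-point linear relation
with the determinant coefficients. -/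
lemma four_point_relation (m p q ta tb tc td : ℝ) :
    (Real.sin (tc - tb) + Real.sin (td - tc) - Real.sin (td - tb))
        * (m + p * Real.cos ta + q * Real.sin ta)
      - (Real.sin (tc - ta) + Real.sin (td - tc) - Real.sin (td - ta))
        * (m + p * Real.cos tb + q * Real.sin tb)
      + (Real.sin (tb - ta) + Real.sin (td - tb) - Real.sin (td - ta))
        * (m + p * Real.cos tc + q * Real.sin tc)
      - (Real.sin (tb - ta) + Real.sin (tc - tb) - Real.sin (tc - ta))
        * (m + p * Real.cos td + q * Real.sin td) = 0 := by
  simp only [Real.sin_sub]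
  ring

set_option maxHeartbeats 1600000 in
/-- Four points on a circle in cyclic order: every closed disc containing the
first and third also contains the second or the fourth. We model the Euclidean
plane as `ℂ` and the cyclic order via strictly increasing angles within one turn. -/
theorem four_point_circle_lemma (o : ℂ) (r : ℝ) (hr : 0 < r)
    (θa θb θc θd : ℝ) (hab : θa < θb) (hbc : θb < θc) (hcd : θc < θd)
    (hda : θd < θa + 2 * Real.pi)
    (a b c d : ℂ)
    (ha : a = o + (r : ℂ) * Complex.exp ((θa : ℂ) * Complex.I))
    (hb : b = o + (r : ℂ) * Complex.exp ((θb : ℂ) * Complex.I))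
    (hc : c = o + (r : ℂ) * Complex.exp ((θc : ℂ) * Complex.I))
    (hd : d = o + (r : ℂ) * Complex.exp ((θd : ℂ) * Complex.I))
    (z : ℂ) (s : ℝ)
    (haD : a ∈ Metric.closedBall z s) (hcD : c ∈ Metric.closedBall z s) :
    b ∈ Metric.closedBall z s ∨ d ∈ Metric.closedBall z s := by
  have hs : 0 ≤ s := le_trans dist_nonneg (Metric.mem_closedBall.1 haD)
  -- the affine function f θ = m + p cos θ + q sin θ with
  set wre := (o - z).re with hwre
  set wim := (o - z).im with hwim
  set m := s ^ 2 - wre ^ 2 - wim ^ 2 - r ^ 2 with hm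
  set p := -(2 * r * wre) with hp
  set q := -(2 * r * wim) with hq
  -- membership in the disc is equivalent to nonnegativity of f
  have mem_iff : ∀ (w : ℂ) (θ : ℝ),
      w = o + (r : ℂ) * Complex.exp ((θ : ℂ) * Complex.I) →
      (w ∈ Metric.closedBall z s ↔ 0 ≤ m + p * Real.cos θ + q * Real.sin θ) := by
    intro w θ hw
    have hre : (w - z).re = wre + r * Real.cos θ := by
      rw [hw]; simp [Complex.add_re, Complex.sub_re, Complex.mul_re,
        Complex.exp_ofReal_mul_I_re, Complex.exp_ofReal_mul_I_im, hwre,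
        Complex.sub_re]
      ring
    have him : (w - z).im = wim + r * Real.sin θ := by
      rw [hw]; simp [Complex.add_im, Complex.sub_im, Complex.mul_im,
        Complex.exp_ofReal_mul_I_re, Complex.exp_ofReal_mul_I_im, hwim,
        Complex.sub_im]
      ring
    have habs : (dist w z) ^ 2 = (wre + r * Real.cos θ) ^ 2 + (wim + r * Real.sin θ) ^ 2 := by
      rw [Complex.dist_eq, Complex.sq_norm, Complex.normSq_apply, hre, him]
      ring
    have hpyth : Real.sin θ ^ 2 + Real.cos θ ^ 2 = 1 := Real.sin_sq_add_cos_sq θ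
    constructor
    · intro hmem
      have h1 : dist w z ≤ s := Metric.mem_closedBall.1 hmem
      have h2 : (dist w z) ^ 2 ≤ s ^ 2 := by nlinarith [dist_nonneg (x := w) (y := z)]
      rw [habs] at h2
      simp only [hm, hp, hq]
      nlinarith
    · intro hf
      refine Metric.mem_closedBall.2 ?_
      have h2 : (dist w z) ^ 2 ≤ s ^ 2 := by
        rw [habs]; simp only [hm, hp, hq] at hf; nlinarith
      nlinarith [dist_nonneg (x := w) (y := z)]
  have hfa : 0 ≤ m + p * Real.cos θa + q * Real.sin θa := (mem_iff a θa ha).1 haD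
  have hfc : 0 ≤ m + p * Real.cos θc + q * Real.sin θc := (mem_iff c θc hc).1 hcD
  by_contra hcon
  push_neg at hcon
  obtain ⟨hbD, hdD⟩ := hcon
  have hfb : m + p * Real.cos θb + q * Real.sin θb < 0 := by
    by_contra h; push_neg at h; exact hbD ((mem_iff b θb hb).2 h)
  have hfd : m + p * Real.cos θd + q * Real.sin θd < 0 := by
    by_contra h; push_neg at h; exact hdD ((mem_iff d θd hd).2 h)
  have Da := det_pos hbc hcd (by linarith : θd < θb + 2 * Real.pi)
  have Db := det_pos (lt_trans hab hbc) hcd hda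
  have Dc := det_pos hab (lt_trans hbc hcd) hda
  have Dd := det_pos hab hbc (by linarith : θc < θa + 2 * Real.pi)
  have rel := four_point_relation m p q θa θb θc θd
  nlinarith [mul_nonneg Da.le hfa, mul_nonneg Dc.le hfc,
    mul_pos Db (neg_pos.2 hfb), mul_pos Dd (neg_pos.2 hfd)]
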